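/- arXiv:2303.16816 — 2 statements merged into one kernel-verified Lean document; each statement's English description precedes it below -/
import Mathlib

section
/- If z is a standard Gaussian random vector in R^m (i.e., z ~ N(0, I_m)), then for every natural number r, the square of the r-th moment of its Euclidean norm satisfies E[‖z‖₂^r]² ≤ 4·(m+r-1)!. -/
open MeasureTheory ProbabilityTheory Real Finset
open scoped ENNReal NNReal


/-- double factorial-ish: D j = 1·3·5···(2j-1) -/
def Dodd : ℕ → ℕ := fun j => ∏ i ∈ Finset.range j, (2*i+1)

/-- P m j = m(m+2)···(m+2j-2) -/
def Pev (m : ℕ) : ℕ → ℕ := fun j => ∏ i ∈ Finset.range j, (m + 2*i)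

lemma Dodd_succ (j : ℕ) : Dodd (j+1) = (2*j+1) * Dodd j := by
  simp [Dodd, Finset.prod_range_succ, Nat.mul_comm]

lemma Pev_succ (m j : ℕ) : Pev m (j+1) = (m + 2*j) * Pev m j := by
  simp [Pev, Finset.prod_range_succ, Nat.mul_comm]

lemma comb_identity (m : ℕ) : ∀ k, ∑ j ∈ range (k+1), k.choose j * (Dodd j * Pev m (k-j)) = Pev (m+1) k := by
  intro k
  induction k with
  | zero => simp [Dodd, Pev]
  | succ k ih =>
    have hsplit := Finset.sum_choose_succ_mul (R := ℕ) (fun i j => Dodd i * Pev m j) k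
    simp only [Nat.cast_id] at hsplit
    rw [show k+1+1 = k+2 from rfl, hsplit]
    have h1 : ∑ i ∈ range (k + 1), k.choose i * (Dodd i * Pev m (k + 1 - i))
        = ∑ i ∈ range (k + 1), (m + 2*(k-i)) * (k.choose i * (Dodd i * Pev m (k - i))) := by
      refine Finset.sum_congr rfl fun i hi => ?_
      have hik : i ≤ k := Nat.lt_succ_iff.mp (Finset.mem_range.mp hi)
      have : k + 1 - i = (k - i) + 1 := by omega
      rw [this, Pev_succ]; ring
    have h2 : ∑ i ∈ range (k + 1), k.choose i * (Dodd (i+1) * Pev m (k - i))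
        = ∑ i ∈ range (k + 1), (2*i+1) * (k.choose i * (Dodd i * Pev m (k - i))) := by
      refine Finset.sum_congr rfl fun i hi => ?_
      rw [Dodd_succ]; ring
    rw [h1, h2, ← Finset.sum_add_distrib]
    have h3 : ∀ i ∈ range (k+1), (m + 2*(k-i)) * (k.choose i * (Dodd i * Pev m (k - i)))
        + (2*i+1) * (k.choose i * (Dodd i * Pev m (k - i)))
        = (m + 1 + 2*k) * (k.choose i * (Dodd i * Pev m (k - i))) := by
      intro i hi
      have hik : i ≤ k := Nat.lt_succ_iff.mp (Finset.mem_range.mp hi)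
      have : m + 2*(k-i) + (2*i+1) = m + 1 + 2*k := by omega
      rw [← Nat.add_mul, this]
    rw [Finset.sum_congr rfl h3, ← Finset.mul_sum, ih, Pev_succ]

lemma Pev_sq_le (m : ℕ) : ∀ a, Pev (m+1) a * Pev (m+1) a ≤ ∏ i ∈ range (2*a), (m + 1 + i) := by
  intro a
  induction a with
  | zero => simp [Pev]
  | succ a ih =>
    have h2a : 2*(a+1) = (2*a) + 1 + 1 := by omega
    rw [Pev_succ, h2a, Finset.prod_range_succ, Finset.prod_range_succ]
    calc (m + 1 + 2 * a) * Pev (m+1) a * ((m + 1 + 2 * a) * Pev (m+1) a)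
        = (Pev (m+1) a * Pev (m+1) a) * ((m + 1 + 2*a) * (m + 1 + 2*a)) := by ring
      _ ≤ (∏ i ∈ range (2*a), (m + 1 + i)) * ((m + 1 + 2*a) * (m + 1 + (2*a+1))) := by
          exact Nat.mul_le_mul ih (Nat.mul_le_mul_left _ (by omega))
      _ = (∏ i ∈ range (2 * a), (m + 1 + i)) * (m + 1 + 2 * a) * (m + 1 + (2 * a + 1)) := by ring

lemma prod_range_le_factorial (m n : ℕ) : ∏ i ∈ range n, (m + 1 + i) ≤ (m + n).factorial := by
  have key : ∀ n, m.factorial * ∏ i ∈ range n, (m + 1 + i) = (m + n).factorial := by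
    intro n
    induction n with
    | zero => simp
    | succ n ih =>
      rw [Finset.prod_range_succ, ← Nat.mul_assoc, ih, show m + (n+1) = (m+n) + 1 by omega,
        Nat.factorial_succ]
      ring
  calc ∏ i ∈ range n, (m + 1 + i) ≤ m.factorial * ∏ i ∈ range n, (m + 1 + i) :=
        Nat.le_mul_of_pos_left _ m.factorial_pos
    _ = (m + n).factorial := key n

lemma Pev_zero_eq (a : ℕ) (ha : 1 ≤ a) : Pev 0 a = 0 := by
  apply Finset.prod_eq_zero (Finset.mem_range.mpr ha); simp

lemma PP_le (m a b : ℕ) (hb : b = a ∨ b = a + 1) :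
    Pev m a * Pev m b ≤ (m + a + b - 1).factorial := by
  cases m with
  | zero =>
    rcases Nat.eq_zero_or_pos b with rfl | hbpos
    · have : a = 0 := by omega
      subst this; simp [Pev]
    · rw [Pev_zero_eq b hbpos]
      simp
  | succ m =>
    have key : ∀ c, Pev (m+1) c * Pev (m+1) c ≤ ∏ i ∈ range (2*c), (m + 1 + i) :=
      fun c => Pev_sq_le m c
    rcases hb with rfl | rfl
    · calc Pev (m+1) b * Pev (m+1) b ≤ ∏ i ∈ range (2*b), (m + 1 + i) := key b
        _ ≤ (m + 2*b).factorial := prod_range_le_factorial m (2*b)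
        _ = (m + 1 + b + b - 1).factorial := by congr 1; omega
    · have hsq := key a
      calc Pev (m+1) a * Pev (m+1) (a+1) = (Pev (m+1) a * Pev (m+1) a) * (m+1+2*a) := by
            rw [Pev_succ]; ring
        _ ≤ (∏ i ∈ range (2*a), (m + 1 + i)) * (m+1+2*a) := Nat.mul_le_mul_right _ hsq
        _ = ∏ i ∈ range (2*a+1), (m + 1 + i) := by
            rw [Finset.prod_range_succ]
        _ ≤ (m + (2*a+1)).factorial := prod_range_le_factorial m (2*a+1)
        _ = (m + 1 + a + (a+1) - 1).factorial := by congr 1; omega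




noncomputable def gI (n : ℕ) : ℝ := ∫ x : ℝ, x ^ n * Real.exp (-(1/2) * x^2)

lemma integrable_pow_gauss (n : ℕ) :
    Integrable (fun x : ℝ => x ^ n * Real.exp (-(1/2) * x^2)) := by
  have := integrable_rpow_mul_exp_neg_mul_sq (b := (1/2:ℝ)) (by norm_num) (s := (n:ℝ))
    (lt_of_lt_of_le (by norm_num) (Nat.cast_nonneg n))
  simpa [Real.rpow_natCast] using this

lemma gI_zero : gI 0 = Real.sqrt (2 * π) := by
  have := integral_gaussian (1/2)
  simp only [gI, pow_zero, one_mul]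
  rw [this]
  rw [show π / (1/2 : ℝ) = 2 * π by ring]

lemma gI_rec (n : ℕ) : gI (n + 2) = (n + 1) * gI n := by
  set E : ℝ → ℝ := fun x => Real.exp (-(1/2) * x^2) with hE
  have hderiv : ∀ x : ℝ, HasDerivAt (fun x => x ^ (n+1) * E x)
      ((n+1 : ℝ) * x ^ n * E x - x ^ (n+2) * E x) x := by
    intro x
    have h1 : HasDerivAt (fun x : ℝ => x ^ (n+1)) ((n+1 : ℝ) * x ^ n) x := by
      simpa using hasDerivAt_pow (n+1) x
    have h2 : HasDerivAt (fun x : ℝ => -(1/2) * x^2) (-(1/2) * (2 * x)) x := by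
      simpa using (hasDerivAt_pow 2 x).const_mul (-(1/2 : ℝ))
    have h3 : HasDerivAt E (Real.exp (-(1/2) * x^2) * (-(1/2) * (2 * x))) x := h2.exp
    have : HasDerivAt (fun x => x ^ (n+1) * E x)
        ((n+1 : ℝ) * x ^ n * E x + x ^ (n+1) * (Real.exp (-(1/2) * x^2) * (-(1/2) * (2 * x)))) x :=
      h1.mul h3
    convert this using 1
    simp only [hE]
    ring
  have hint : Integrable (fun x : ℝ =>
      (n+1 : ℝ) * x ^ n * E x - x ^ (n+2) * E x) := by
    exact (((integrable_pow_gauss n).const_mul ((n:ℝ)+1)).congr (Filter.Eventually.of_forall fun x => by ring)).sub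
      (integrable_pow_gauss (n+2))
  have hf : Integrable (fun x : ℝ => x ^ (n+1) * E x) := integrable_pow_gauss (n+1)
  have h0 : ∫ x : ℝ, ((n+1 : ℝ) * x ^ n * E x - x ^ (n+2) * E x) = 0 :=
    integral_eq_zero_of_hasDerivAt_of_integrable hderiv hint hf
  have hsub : ∫ x : ℝ, ((n+1 : ℝ) * x ^ n * E x - x ^ (n+2) * E x)
      = (n+1 : ℝ) * gI n - gI (n+2) := by
    rw [integral_sub (((integrable_pow_gauss n).const_mul ((n:ℝ)+1)).congr
      (Filter.Eventually.of_forall fun x => by ring)) (integrable_pow_gauss (n+2))]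
    congr 1
    rw [gI, ← integral_const_mul]
    congr 1 with x
    ring
  rw [hsub] at h0
  linarith

lemma gI_even (j : ℕ) : gI (2 * j) = (Dodd j : ℝ) * Real.sqrt (2 * π) := by
  induction j with
  | zero => simp [gI_zero, Dodd]
  | succ j ih =>
    have : 2 * (j + 1) = 2 * j + 2 := by ring
    have hD : Dodd (j+1) = (2*j+1) * Dodd j := by
      simp [Dodd, Finset.prod_range_succ, Nat.mul_comm]
    rw [this, gI_rec, ih, hD]
    push_cast
    ring

lemma gaussianPDFReal_std (x : ℝ) :
    gaussianPDFReal 0 1 x = (Real.sqrt (2 * π))⁻¹ * Real.exp (-(1/2) * x^2) := by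
  rw [gaussianPDFReal_def]
  simp only [NNReal.coe_one, mul_one, sub_zero]
  rw [show ∀ y : ℝ, -y^2/2 = -(1/2)*y^2 from fun y => by ring]

lemma gaussianReal_std_eq :
    gaussianReal 0 1 = (volume : Measure ℝ).withDensity
      (fun x => ((gaussianPDFReal 0 1 x).toNNReal : ℝ≥0∞)) := by
  rw [gaussianReal_of_var_ne_zero 0 one_ne_zero]
  rfl

lemma integral_gaussianReal_std (g : ℝ → ℝ) :
    ∫ x, g x ∂(gaussianReal 0 1) = ∫ x, gaussianPDFReal 0 1 x * g x := by
  rw [gaussianReal_std_eq,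
    integral_withDensity_eq_integral_smul ((measurable_gaussianPDFReal 0 1).real_toNNReal) g]
  congr 1 with x
  rw [NNReal.smul_def, Real.coe_toNNReal _ (gaussianPDFReal_nonneg 0 1 x), smul_eq_mul]

lemma integrable_pow_gaussianReal (n : ℕ) :
    Integrable (fun x => x ^ n) (gaussianReal 0 1) := by
  rw [gaussianReal_std_eq,
    integrable_withDensity_iff_integrable_smul ((measurable_gaussianPDFReal 0 1).real_toNNReal)]
  have : Integrable (fun x : ℝ => (Real.sqrt (2 * π))⁻¹ * (x ^ n * Real.exp (-(1/2) * x^2))) :=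
    (integrable_pow_gauss n).const_mul _
  apply this.congr
  filter_upwards with x
  rw [NNReal.smul_def, Real.coe_toNNReal _ (gaussianPDFReal_nonneg 0 1 x), gaussianPDFReal_std,
    smul_eq_mul]
  ring

lemma moment_gaussianReal (j : ℕ) :
    ∫ x, x ^ (2 * j) ∂(gaussianReal 0 1) = (Dodd j : ℝ) := by
  rw [integral_gaussianReal_std]
  have : ∀ x : ℝ, gaussianPDFReal 0 1 x * x ^ (2*j)
      = (Real.sqrt (2 * π))⁻¹ * (x ^ (2*j) * Real.exp (-(1/2) * x^2)) := by
    intro x; rw [gaussianPDFReal_std]; ring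
  simp_rw [this]
  rw [integral_const_mul]
  show (Real.sqrt (2 * π))⁻¹ * gI (2*j) = _
  rw [gI_even]
  have hpos : Real.sqrt (2 * π) ≠ 0 := by
    positivity
  field_simp

lemma lintegral_pow_gaussianReal (j : ℕ) :
    ∫⁻ x, ENNReal.ofReal (x ^ (2 * j)) ∂(gaussianReal 0 1) = ENNReal.ofReal (Dodd j) := by
  rw [← ofReal_integral_eq_lintegral_ofReal (integrable_pow_gaussianReal (2*j))
    (Filter.Eventually.of_forall fun x => by
      simp only [Pi.zero_apply]
      rw [pow_mul]; exact pow_nonneg (sq_nonneg x) j), moment_gaussianReal]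



lemma lintegral_sumsq_pow (m : ℕ) : ∀ k : ℕ,
    ∫⁻ x : Fin m → ℝ, ENNReal.ofReal ((∑ i, x i ^ 2) ^ k)
        ∂(Measure.pi fun _ : Fin m => gaussianReal 0 1)
      = ENNReal.ofReal (Pev m k) := by
  induction m with
  | zero =>
    intro k
    simp only [Finset.univ_eq_empty, Finset.sum_empty]
    rw [lintegral_const]
    rw [measure_univ, mul_one]
    cases k with
    | zero => simp [Pev]
    | succ k =>
      rw [Pev_zero_eq _ (Nat.succ_pos k)]
      simp
  | succ m ih =>
    intro k
    set ν : Measure (Fin m → ℝ) := Measure.pi fun _ : Fin m => gaussianReal 0 1 with hν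
    have hmp := measurePreserving_piFinSuccAbove (fun _ : Fin (m+1) => gaussianReal 0 1) 0
    set e := MeasurableEquiv.piFinSuccAbove (fun _ : Fin (m+1) => ℝ) 0 with he
    set G : ℝ × (Fin m → ℝ) → ℝ≥0∞ :=
      fun p => ENNReal.ofReal ((p.1 ^ 2 + ∑ j, p.2 j ^ 2) ^ k) with hG
    have hGmeas : Measurable G := by
      apply ENNReal.measurable_ofReal.comp
      apply Measurable.pow_const
      exact (measurable_fst.pow_const 2).add
        (Finset.measurable_sum _ fun j _ => (measurable_snd.eval (a := j)).pow_const 2)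
    have hcomp : ∀ x : Fin (m+1) → ℝ, ENNReal.ofReal ((∑ i, x i ^ 2) ^ k) = G (e x) := by
      intro x
      have hex : e x = (x 0, fun j => x ((0 : Fin (m+1)).succAbove j)) := rfl
      rw [hex, hG]
      simp only
      rw [Fin.sum_univ_succAbove (fun i => x i ^ 2) 0]
    calc ∫⁻ x : Fin (m+1) → ℝ, ENNReal.ofReal ((∑ i, x i ^ 2) ^ k)
          ∂(Measure.pi fun _ : Fin (m+1) => gaussianReal 0 1)
        = ∫⁻ x, G (e x) ∂(Measure.pi fun _ : Fin (m+1) => gaussianReal 0 1) := by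
          simp_rw [hcomp]
      _ = ∫⁻ p, G p ∂((gaussianReal 0 1).prod ν) := hmp.lintegral_comp hGmeas
      _ = ∫⁻ t, ∫⁻ y, G (t, y) ∂ν ∂(gaussianReal 0 1) := lintegral_prod G hGmeas.aemeasurable
      _ = ∑ j ∈ range (k+1), ENNReal.ofReal ((Dodd j : ℝ))
            * ENNReal.ofReal ((Nat.choose k j : ℝ) * Pev m (k-j)) := by
          have hS : ∀ y : Fin m → ℝ, (0:ℝ) ≤ ∑ i, y i ^ 2 :=
            fun y => Finset.sum_nonneg fun _ _ => sq_nonneg _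
          have hSmeas : Measurable fun y : Fin m → ℝ => ∑ i, y i ^ 2 :=
            Finset.measurable_sum _ fun i _ => (measurable_pi_apply i).pow_const 2
          have inner : ∀ t : ℝ, ∫⁻ y, G (t, y) ∂ν = ∑ j ∈ range (k+1),
              ENNReal.ofReal (t^(2*j)) * ENNReal.ofReal ((Nat.choose k j : ℝ) * Pev m (k-j)) := by
            intro t
            have ht2 : ∀ j : ℕ, (0:ℝ) ≤ t^(2*j) := fun j => by
              rw [pow_mul]; exact pow_nonneg (sq_nonneg t) j
            have hexp : ∀ y : Fin m → ℝ, G (t, y)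
                = ∑ j ∈ range (k+1),
                  ENNReal.ofReal (t^(2*j) * (Nat.choose k j : ℝ)) * ENNReal.ofReal ((∑ i, y i ^ 2)^(k-j)) := by
              intro y
              rw [hG]
              simp only
              rw [add_pow]
              rw [ENNReal.ofReal_sum_of_nonneg (fun j hj =>
                mul_nonneg (mul_nonneg (pow_nonneg (sq_nonneg t) j)
                  (pow_nonneg (hS y) _)) (Nat.cast_nonneg _))]
              refine Finset.sum_congr rfl fun j hj => ?_
              rw [← ENNReal.ofReal_mul (mul_nonneg (ht2 j) (Nat.cast_nonneg _))]
              congr 1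
              ring
            simp_rw [hexp]
            rw [lintegral_finset_sum _ (fun j hj => by
              exact (((hSmeas.pow_const (k-j)).ennreal_ofReal).const_mul _))]
            refine Finset.sum_congr rfl fun j hj => ?_
            rw [lintegral_const_mul _ ((hSmeas.pow_const (k-j)).ennreal_ofReal)]
            rw [show (∫⁻ y, ENNReal.ofReal ((∑ i, y i ^ 2) ^ (k - j)) ∂ν) = ENNReal.ofReal (Pev m (k-j)) from ih (k-j)]
            rw [← ENNReal.ofReal_mul (mul_nonneg (ht2 j) (Nat.cast_nonneg _)),
              ← ENNReal.ofReal_mul (ht2 j)]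
            congr 1
            ring
          simp_rw [inner]
          rw [lintegral_finset_sum _ (fun j hj => by
            exact ((measurable_id'.pow_const (2*j)).ennreal_ofReal).mul_const _)]
          refine Finset.sum_congr rfl fun j hj => ?_
          rw [lintegral_mul_const _ ((measurable_id'.pow_const (2*j)).ennreal_ofReal)]
          congr 1
          exact lintegral_pow_gaussianReal j
      _ = ENNReal.ofReal (Pev (m+1) k) := by
          rw [← comb_identity m k, Nat.cast_sum,
            ENNReal.ofReal_sum_of_nonneg (fun j hj => Nat.cast_nonneg _)]
          refine Finset.sum_congr rfl fun j hj => ?_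
          rw [← ENNReal.ofReal_mul (Nat.cast_nonneg _)]
          congr 1
          push_cast
          ring


/-- If `z` is a standard Gaussian random vector in `ℝ^m` (law equal to the product of
`m` standard real Gaussians), then for every natural number `r` the square of the `r`-th
moment of its Euclidean norm satisfies `E[‖z‖₂^r]² ≤ 4·(m+r-1)!`. -/
theorem gaussian_norm_moment_sq_le {m : ℕ} {Ω : Type*} [MeasurableSpace Ω]
    (μ : Measure Ω) [IsProbabilityMeasure μ] (z : Ω → Fin m → ℝ)
    (hz : Measure.map z μ = Measure.pi fun _ : Fin m => gaussianReal 0 1) (r : ℕ) :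
    (∫ ω, (Real.sqrt (∑ i, (z ω i) ^ 2)) ^ r ∂μ) ^ 2
      ≤ 4 * (Nat.factorial (m + r - 1) : ℝ) := by
  have hzm : AEMeasurable z μ := aemeasurable_of_map_neZero (by rw [hz]; infer_instance)
  set pm : Measure (Fin m → ℝ) := Measure.pi fun _ : Fin m => gaussianReal 0 1 with hpm
  set F : (Fin m → ℝ) → ℝ := fun x => (Real.sqrt (∑ i, x i ^ 2)) ^ r with hF
  have hSmeas : Measurable fun x : Fin m → ℝ => ∑ i, x i ^ 2 :=
    Finset.measurable_sum _ fun i _ => (measurable_pi_apply i).pow_const 2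
  have hS : ∀ x : Fin m → ℝ, (0:ℝ) ≤ ∑ i, x i ^ 2 :=
    fun x => Finset.sum_nonneg fun _ _ => sq_nonneg _
  have hFmeas : Measurable F := (hSmeas.sqrt).pow_const r
  have hstep1 : ∫ ω, (Real.sqrt (∑ i, (z ω i) ^ 2)) ^ r ∂μ = ∫ x, F x ∂pm := by
    rw [← hz, integral_map hzm hFmeas.aestronglyMeasurable]
  have hstep2 : ∫ x, F x ∂pm = (∫⁻ x, ENNReal.ofReal (F x) ∂pm).toReal := by
    exact integral_eq_lintegral_of_nonneg_ae (Filter.Eventually.of_forall fun x => by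
      simp only [Pi.zero_apply, hF]; positivity) hFmeas.aestronglyMeasurable
  set N : ℝ≥0∞ := ∫⁻ x, ENNReal.ofReal (F x) ∂pm with hN
  set a : ℕ := r / 2 with ha
  set b : ℕ := r - r / 2 with hb
  have hab : a + b = r := by omega
  have hba : b = a ∨ b = a + 1 := by omega
  have hconj : (2:ℝ).HolderConjugate 2 := by constructor <;> norm_num
  set f : (Fin m → ℝ) → ℝ≥0∞ := fun x => ENNReal.ofReal ((Real.sqrt (∑ i, x i ^ 2)) ^ a) with hf
  set g : (Fin m → ℝ) → ℝ≥0∞ := fun x => ENNReal.ofReal ((Real.sqrt (∑ i, x i ^ 2)) ^ b) with hg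
  have hfm : AEMeasurable f pm := ((hSmeas.sqrt.pow_const a).ennreal_ofReal).aemeasurable
  have hgm : AEMeasurable g pm := ((hSmeas.sqrt.pow_const b).ennreal_ofReal).aemeasurable
  have hfg : ∀ x, ENNReal.ofReal (F x) = (f * g) x := by
    intro x
    simp only [hf, hg, hF, Pi.mul_apply]
    rw [← ENNReal.ofReal_mul (by positivity), ← pow_add, hab]
  have hpow : ∀ (c : ℕ) (x : Fin m → ℝ),
      (ENNReal.ofReal ((Real.sqrt (∑ i, x i ^ 2)) ^ c)) ^ (2:ℝ)
        = ENNReal.ofReal ((∑ i, x i ^ 2) ^ c) := by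
    intro c x
    rw [show (2:ℝ) = ((2:ℕ):ℝ) by norm_num, ENNReal.rpow_natCast,
      ← ENNReal.ofReal_pow (by positivity), ← pow_mul, mul_comm, pow_mul,
      Real.sq_sqrt (hS x)]
  have hf2 : ∫⁻ x, f x ^ (2:ℝ) ∂pm = ENNReal.ofReal (Pev m a) := by
    simp_rw [hf, hpow a]
    exact lintegral_sumsq_pow m a
  have hg2 : ∫⁻ x, g x ^ (2:ℝ) ∂pm = ENNReal.ofReal (Pev m b) := by
    simp_rw [hg, hpow b]
    exact lintegral_sumsq_pow m b
  have hCS : N ≤ (ENNReal.ofReal (Pev m a)) ^ (1/2:ℝ) * (ENNReal.ofReal (Pev m b)) ^ (1/2:ℝ) := by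
    calc N = ∫⁻ x, (f * g) x ∂pm := by rw [hN]; exact lintegral_congr hfg
      _ ≤ (∫⁻ x, f x ^ (2:ℝ) ∂pm) ^ (1/2:ℝ) * (∫⁻ x, g x ^ (2:ℝ) ∂pm) ^ (1/2:ℝ) :=
          ENNReal.lintegral_mul_le_Lp_mul_Lq pm hconj hfm hgm
      _ = (ENNReal.ofReal (Pev m a)) ^ (1/2:ℝ) * (ENNReal.ofReal (Pev m b)) ^ (1/2:ℝ) := by
          rw [hf2, hg2]
  have hhalf : ∀ x : ℝ≥0∞, (x ^ (1/2:ℝ)) ^ (2:ℕ) = x := by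
    intro x
    rw [← ENNReal.rpow_natCast (x ^ (1/2:ℝ)) 2, ← ENNReal.rpow_mul]
    norm_num
  have hsq : N ^ (2:ℕ) ≤ ENNReal.ofReal ((Pev m a : ℝ) * (Pev m b : ℝ)) := by
    calc N ^ (2:ℕ) ≤ ((ENNReal.ofReal (Pev m a)) ^ (1/2:ℝ) * (ENNReal.ofReal (Pev m b)) ^ (1/2:ℝ)) ^ (2:ℕ) :=
          pow_le_pow_left' hCS 2
      _ = ENNReal.ofReal (Pev m a) * ENNReal.ofReal (Pev m b) := by
          rw [mul_pow, hhalf, hhalf]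
      _ = ENNReal.ofReal ((Pev m a : ℝ) * (Pev m b : ℝ)) :=
          (ENNReal.ofReal_mul (Nat.cast_nonneg _)).symm
  have hfact : ((Pev m a : ℝ) * (Pev m b : ℝ)) ≤ 4 * ((m + r - 1).factorial : ℝ) := by
    have h1 : Pev m a * Pev m b ≤ (m + r - 1).factorial := by
      have := PP_le m a b hba
      rwa [show m + a + b - 1 = m + r - 1 by omega] at this
    have h2 : ((Pev m a * Pev m b : ℕ) : ℝ) ≤ (((m + r - 1).factorial : ℕ) : ℝ) :=
      Nat.cast_le.mpr h1
    push_cast at h2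
    have h3 : (0:ℝ) ≤ ((m + r - 1).factorial : ℝ) := Nat.cast_nonneg _
    linarith
  have hle : N ^ (2:ℕ) ≤ ENNReal.ofReal (4 * ((m + r - 1).factorial : ℝ)) :=
    hsq.trans (ENNReal.ofReal_le_ofReal hfact)
  rw [hstep1, hstep2, ← ENNReal.toReal_pow]
  exact ENNReal.toReal_le_of_le_ofReal (by positivity) hle
end

section
/- PAC-Bayesian bound via Donsker–Varadhan: Let F be a measurable space of hypotheses with a prior probability density π, and let X(f), Y(f) be real-valued measurable functions of f and the sample such that E_{f∼π} E[e^{λ(X(f)−Y(f))}] = e^{Ψ} < ∞. Then for any δ ∈ (0,1], with probability at least 1−δ, simultaneously for all probability densities ρ absolutely continuous with respect to π: E_{f∼ρ}[X(f)] ≤ E_{f∼ρ}[Y(f)] + (1/λ)(KL(ρ‖π) + ln(1/δ) + Ψ). -/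
open MeasureTheory

lemma dv_one_side {F : Type*} [MeasurableSpace F] (π ρ : Measure F)
    [IsProbabilityMeasure π] [IsProbabilityMeasure ρ] (hρπ : ρ ≪ π)
    (g : F → ℝ) (hgm : Measurable g) (hg : Integrable g ρ)
    (hexp : Integrable (fun f => Real.exp (g f)) π)
    (hlog : Integrable (fun f => Real.log ((ρ.rnDeriv π f).toReal)) ρ) :
    ∫ f, g f ∂ρ ≤ ∫ f, Real.log ((ρ.rnDeriv π f).toReal) ∂ρ
      + Real.log (∫ f, Real.exp (g f) ∂π) := by
  set r : F → ℝ := fun f => (ρ.rnDeriv π f).toReal with hr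
  set c : ℝ := ∫ f, Real.exp (g f) ∂π with hc
  have hcpos : 0 < c := integral_exp_pos hexp
  have hrm : Measurable r := (Measure.measurable_rnDeriv ρ π).ennreal_toReal
  set W : F → ℝ := fun f => Real.exp (g f) / r f with hW
  have hWm : Measurable W := (Real.measurable_exp.comp hgm).div hrm
  -- a.e. positivity of r under ρ
  have hrpos : ∀ᵐ f ∂ρ, 0 < r f := by
    filter_upwards [Measure.rnDeriv_pos hρπ, hρπ.ae_le (Measure.rnDeriv_lt_top ρ π)]
      with f h1 h2
    exact ENNReal.toReal_pos h1.ne' h2.ne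
  -- r • W is dominated by exp ∘ g
  have hdom : ∀ f, r f * W f ≤ Real.exp (g f) ∧ 0 ≤ r f * W f := by
    intro f
    rcases eq_or_ne (r f) 0 with h0 | h0
    · simp [hW, h0, (Real.exp_pos _).le]
    · have : r f * W f = Real.exp (g f) := by
        simp only [hW]; field_simp
      rw [this]
      exact ⟨le_refl _, (Real.exp_pos _).le⟩
  have hrWint : Integrable (fun f => r f * W f) π := by
    refine hexp.mono ((hrm.mul hWm).aestronglyMeasurable) ?_
    filter_upwards with f
    rw [Real.norm_eq_abs, Real.norm_eq_abs, abs_of_nonneg (hdom f).2,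
      abs_of_nonneg (Real.exp_pos _).le]
    exact (hdom f).1
  have hWint : Integrable W ρ := by
    rw [← integrable_rnDeriv_smul_iff hρπ]
    simpa [smul_eq_mul] using hrWint
  have hWle : ∫ f, W f ∂ρ ≤ c := by
    calc ∫ f, W f ∂ρ = ∫ f, r f • W f ∂π := (integral_rnDeriv_smul hρπ).symm
    _ ≤ ∫ f, Real.exp (g f) ∂π := by
        refine integral_mono (by simpa [smul_eq_mul] using hrWint) hexp ?_
        intro f; simpa using (hdom f).1
  -- pointwise inequality a.e. ρ
  have hpt : ∀ᵐ f ∂ρ, g f - Real.log (r f) ≤ W f / c - 1 + Real.log c := by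
    filter_upwards [hrpos] with f hf
    have hWf : 0 < W f := div_pos (Real.exp_pos _) hf
    have h1 : g f - Real.log (r f) = Real.log (W f) := by
      rw [hW]; simp only
      rw [Real.log_div (Real.exp_ne_zero _) hf.ne', Real.log_exp]
    have h2 : Real.log (W f) = Real.log (W f / c) + Real.log c := by
      rw [Real.log_div hWf.ne' hcpos.ne', sub_add_cancel]
    have h3 : Real.log (W f / c) ≤ W f / c - 1 :=
      Real.log_le_sub_one_of_pos (div_pos hWf hcpos)
    rw [h1, h2]
    linarith
  have hint1 : Integrable (fun f => g f - Real.log (r f)) ρ := hg.sub hlog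
  have hint2 : Integrable (fun f => W f / c - 1 + Real.log c) ρ :=
    ((hWint.div_const c).sub (integrable_const 1)).add (integrable_const _)
  have hmain := integral_mono_ae hint1 hint2 hpt
  rw [integral_sub hg hlog] at hmain
  have hrhs : ∫ f, (W f / c - 1 + Real.log c) ∂ρ ≤ Real.log c := by
    have heq : (fun f => W f / c - 1 + Real.log c)
        = fun f => W f / c + (Real.log c - 1) := by funext f; ring
    rw [heq, integral_add (hWint.div_const c) (integrable_const _), integral_div,
      integral_const]
    simp only [measure_univ, probReal_univ, ENNReal.toReal_one, one_smul, smul_eq_mul]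
    have : (∫ f, W f ∂ρ) / c ≤ 1 := by
      rw [div_le_one hcpos]; exact hWle
    linarith
  linarith

/-- Kullback–Leibler divergence `KL(ρ‖π) = E_{f∼ρ}[ln (dρ/dπ)(f)]`. -/
noncomputable def klDivergence {F : Type*} [MeasurableSpace F] (ρ π : Measure F) : ℝ :=
  ∫ f, Real.log ((ρ.rnDeriv π f).toReal) ∂ρ

/-- PAC-Bayesian bound via Donsker–Varadhan: if
`E_{f∼π} E[e^{λ(X(f)−Y(f))}] = e^Ψ < ∞`, then for any `δ ∈ (0,1]`, with probability at
least `1−δ`, simultaneously for all probability measures `ρ ≪ π`: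
`E_{f∼ρ}[X(f)] ≤ E_{f∼ρ}[Y(f)] + (1/λ)(KL(ρ‖π) + ln(1/δ) + Ψ)`. -/
theorem pac_bayes_bound {F Ω : Type*} [MeasurableSpace F] [MeasurableSpace Ω]
    (μ : Measure Ω) [IsProbabilityMeasure μ]
    (π : Measure F) [IsProbabilityMeasure π]
    (X Y : F → Ω → ℝ)
    (hX : Measurable (Function.uncurry X)) (hY : Measurable (Function.uncurry Y))
    (lam : ℝ) (hlam : 0 < lam) (Ψ : ℝ)
    (hintmgf : Integrable
      (fun p : F × Ω => Real.exp (lam * (X p.1 p.2 - Y p.1 p.2))) (π.prod μ))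
    (hmgf : ∫ f, ∫ ω, Real.exp (lam * (X f ω - Y f ω)) ∂μ ∂π = Real.exp Ψ)
    (δ : ℝ) (hδ : δ ∈ Set.Ioc (0 : ℝ) 1) :
    ENNReal.ofReal (1 - δ) ≤
      μ {ω | ∀ ρ : Measure F, IsProbabilityMeasure ρ → ρ ≪ π →
        Integrable (fun f => X f ω) ρ → Integrable (fun f => Y f ω) ρ →
        Integrable (fun f => Real.log ((ρ.rnDeriv π f).toReal)) ρ →
        ∫ f, X f ω ∂ρ ≤ ∫ f, Y f ω ∂ρ
          + (1 / lam) * (klDivergence ρ π + Real.log (1 / δ) + Ψ)} := by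
  obtain ⟨hδ0, hδ1⟩ := hδ
  set G : F → Ω → ℝ := fun f ω => Real.exp (lam * (X f ω - Y f ω)) with hG
  have hGm : Measurable (Function.uncurry G) := by
    exact Real.measurable_exp.comp ((hX.sub hY).const_mul lam)
  set Z : Ω → ℝ := fun ω => ∫ f, G f ω ∂π with hZ
  have hZint : Integrable Z μ := by
    have := hintmgf.swap.integral_prod_left
    simpa [hZ, hG] using this
  have hZmean : ∫ ω, Z ω ∂μ = Real.exp Ψ := by
    rw [hZ, ← integral_integral_swap (f := G) (by exact hintmgf)]
    exact hmgf
  have hZnonneg : 0 ≤ᵐ[μ] Z := by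
    filter_upwards with ω
    exact integral_nonneg fun f => (Real.exp_pos _).le
  set a : ℝ := Real.exp Ψ / δ with ha
  have ha_pos : 0 < a := div_pos (Real.exp_pos _) hδ0
  -- Markov
  have hmarkov : μ {ω | a ≤ Z ω} ≤ ENNReal.ofReal δ := by
    have h := mul_meas_ge_le_integral_of_nonneg hZnonneg hZint a
    rw [hZmean] at h
    have htr : (μ {ω | a ≤ Z ω}).toReal ≤ δ := by
      have h2 : (μ {ω | a ≤ Z ω}).toReal ≤ Real.exp Ψ / a := by
        rw [le_div_iff₀ ha_pos, mul_comm]; exact h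
      have : Real.exp Ψ / a = δ := by
        rw [ha]; field_simp
      linarith
    exact ENNReal.le_ofReal_iff_toReal_le (measure_ne_top μ _) hδ0.le |>.mpr htr
  have hae : ∀ᵐ ω ∂μ, Integrable (fun f => G f ω) π := by
    have := hintmgf.prod_left_ae
    simpa [hG] using this
  -- the good event implies the conclusion
  set S : Set Ω := {ω | Integrable (fun f => G f ω) π} ∩ {ω | a ≤ Z ω}ᶜ with hS
  have hsub : S ⊆ {ω | ∀ ρ : Measure F, IsProbabilityMeasure ρ → ρ ≪ π →
      Integrable (fun f => X f ω) ρ → Integrable (fun f => Y f ω) ρ →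
      Integrable (fun f => Real.log ((ρ.rnDeriv π f).toReal)) ρ →
      ∫ f, X f ω ∂ρ ≤ ∫ f, Y f ω ∂ρ
        + (1 / lam) * (klDivergence ρ π + Real.log (1 / δ) + Ψ)} := by
    rintro ω ⟨hωint, hωZ⟩
    intro ρ hρprob hρπ hXi hYi hlogi
    have hgm : Measurable (fun f => lam * (X f ω - Y f ω)) := by
      have hXm : Measurable (fun f => X f ω) :=
        hX.comp (measurable_id.prodMk measurable_const)
      have hYm : Measurable (fun f => Y f ω) :=
        hY.comp (measurable_id.prodMk measurable_const)
      exact (hXm.sub hYm).const_mul lam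
    have hgint : Integrable (fun f => lam * (X f ω - Y f ω)) ρ :=
      (hXi.sub hYi).const_mul lam
    have hdv := dv_one_side π ρ hρπ (fun f => lam * (X f ω - Y f ω)) hgm hgint hωint hlogi
    have hZω : Z ω < a := lt_of_not_ge hωZ
    have hZωpos : 0 < Z ω := integral_exp_pos hωint
    have hloga : Real.log (Z ω) ≤ Ψ + Real.log (1 / δ) := by
      have h1 : Real.log (Z ω) ≤ Real.log a := Real.log_le_log hZωpos hZω.le
      have h2 : Real.log a = Ψ + Real.log (1 / δ) := by
        rw [ha, Real.log_div (Real.exp_ne_zero _) hδ0.ne', Real.log_exp,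
          one_div, Real.log_inv]
        ring
      linarith
    have hglhs : ∫ f, lam * (X f ω - Y f ω) ∂ρ
        = lam * (∫ f, X f ω ∂ρ - ∫ f, Y f ω ∂ρ) := by
      rw [integral_const_mul, integral_sub hXi hYi]
    rw [hglhs] at hdv
    have hkey : lam * (∫ f, X f ω ∂ρ - ∫ f, Y f ω ∂ρ)
        ≤ klDivergence ρ π + Real.log (1 / δ) + Ψ := by
      unfold klDivergence
      have : Real.log (∫ f, Real.exp (lam * (X f ω - Y f ω)) ∂π) = Real.log (Z ω) := rfl
      linarith [hdv, hloga]
    have hmul := mul_le_mul_of_nonneg_left hkey (le_of_lt (one_div_pos.mpr hlam))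
    have : (1 / lam) * (lam * (∫ f, X f ω ∂ρ - ∫ f, Y f ω ∂ρ))
        = ∫ f, X f ω ∂ρ - ∫ f, Y f ω ∂ρ := by
      field_simp
    rw [this] at hmul
    linarith
  refine le_trans ?_ (measure_mono hsub)
  -- measure of the good event
  have hSc : μ Sᶜ ≤ ENNReal.ofReal δ := by
    have : Sᶜ ⊆ {ω | Integrable (fun f => G f ω) π}ᶜ ∪ {ω | a ≤ Z ω} := by
      rw [hS, Set.compl_inter, compl_compl]
    refine le_trans (measure_mono this) ?_
    refine le_trans (measure_union_le _ _) ?_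
    have h0 : μ {ω | Integrable (fun f => G f ω) π}ᶜ = 0 := by
      rw [Set.compl_setOf]; exact ae_iff.mp hae
    rw [h0, zero_add]
    exact hmarkov
  have h1 : (1 : ENNReal) ≤ μ S + ENNReal.ofReal δ := by
    calc (1 : ENNReal) = μ Set.univ := (measure_univ).symm
    _ ≤ μ (S ∪ Sᶜ) := by rw [Set.union_compl_self]
    _ ≤ μ S + μ Sᶜ := measure_union_le _ _
    _ ≤ μ S + ENNReal.ofReal δ := add_le_add_right hSc _
  have : ENNReal.ofReal (1 - δ) = 1 - ENNReal.ofReal δ := by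
    rw [← ENNReal.ofReal_one, ← ENNReal.ofReal_sub _ hδ0.le]
  rw [this]
  exact tsub_le_iff_right.mpr h1
end
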